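/- Let Z, W₁, …, W_n be i.i.d. standard normal random variables and a ∈ ℝ. Then E[Z · 1{Z / sqrt((1/n)(W₁² + ⋯ + W_n²)) > a}] = (2π)^{-1/2} (1 + a²/n)^{-n/2}. -/

import Mathlib

open MeasureTheory ProbabilityTheory

open Real Filter Set
open scoped ENNReal NNReal

lemma exp_neg_sq_tendsto : Tendsto (fun x : ℝ => -Real.exp (-x ^ 2 / 2)) atTop (nhds 0) := by
  rw [show (0:ℝ) = -0 by norm_num]
  apply Tendsto.neg
  apply Real.tendsto_exp_atBot.comp
  have h1 : Tendsto (fun x : ℝ => x ^ 2) atTop atTop := tendsto_pow_atTop two_ne_zero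
  have h2 : Tendsto (fun x : ℝ => x ^ 2 / 2) atTop atTop := h1.atTop_div_const (by norm_num)
  have h3 : Tendsto (fun x : ℝ => -(x ^ 2 / 2)) atTop atBot := tendsto_neg_atBot_iff.mpr h2
  convert h3 using 2 with x
  ring

lemma integral_Ioi_mul_exp (t : ℝ) :
    ∫ x in Ioi t, x * Real.exp (-x ^ 2 / 2) = Real.exp (-t ^ 2 / 2) := by
  have hderiv : ∀ x ∈ Ici t, HasDerivAt (fun y : ℝ => -Real.exp (-y ^ 2 / 2))
      (x * Real.exp (-x ^ 2 / 2)) x := by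
    intro x _
    have h0 : HasDerivAt (fun y : ℝ => y ^ 2) (2 * x) x := by
      simpa using hasDerivAt_pow 2 x
    have h1 : HasDerivAt (fun y : ℝ => -y ^ 2 / 2) (-x) x := by
      have := (h0.neg).div_const 2
      exact this.congr_deriv (by ring)
    have h2 := (h1.exp).neg
    exact h2.congr_deriv (by ring)
  have hint : IntegrableOn (fun x : ℝ => x * Real.exp (-x ^ 2 / 2)) (Ioi t) := by
    have h := integrable_mul_exp_neg_mul_sq (b := (1:ℝ)/2) (by norm_num)
    have he : (fun x : ℝ => x * Real.exp (-(1/2) * x ^ 2))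
        = fun x : ℝ => x * Real.exp (-x ^ 2 / 2) := by
      funext x; congr 1; ring
    rw [he] at h
    exact h.integrableOn
  have := integral_Ioi_of_hasDerivAt_of_tendsto' hderiv hint exp_neg_sq_tendsto
  rw [this]; ring

lemma integral_gaussianReal_eq (f : ℝ → ℝ) :
    ∫ x, f x ∂(gaussianReal 0 1)
      = ∫ x, gaussianPDFReal 0 1 x * f x := by
  rw [gaussianReal_of_var_ne_zero 0 one_ne_zero]
  have h : gaussianPDF 0 1 = fun x => ((Real.toNNReal (gaussianPDFReal 0 1 x) : ℝ≥0) : ℝ≥0∞) := rfl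
  rw [h, integral_withDensity_eq_integral_smul ((measurable_gaussianPDFReal 0 1).real_toNNReal)]
  congr 1 with x
  simp [NNReal.smul_def, Real.coe_toNNReal _ (gaussianPDFReal_nonneg 0 1 x)]

lemma gaussianPDFReal_zero_one (x : ℝ) :
    gaussianPDFReal 0 1 x = (Real.sqrt (2 * π))⁻¹ * Real.exp (-x ^ 2 / 2) := by
  simp [gaussianPDFReal, NNReal.coe_one, mul_one, sub_zero]

lemma sqrt_two_pi_inv : (Real.sqrt (2 * π))⁻¹ = (2 * π) ^ (-(1:ℝ)/2) := by
  rw [Real.sqrt_eq_rpow, show (-(1:ℝ)/2) = -(1/2 : ℝ) by norm_num,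
    Real.rpow_neg (by positivity)]

lemma integral_mul_ite_gaussianReal (t : ℝ) :
    ∫ z, z * (if t < z then (1:ℝ) else 0) ∂(gaussianReal 0 1)
      = (2 * π) ^ (-(1:ℝ)/2) * Real.exp (-t ^ 2 / 2) := by
  rw [integral_gaussianReal_eq]
  have h : (fun x => gaussianPDFReal 0 1 x * (x * (if t < x then (1:ℝ) else 0)))
      = Set.indicator (Ioi t) (fun x => (Real.sqrt (2 * π))⁻¹ * (x * Real.exp (-x ^ 2 / 2))) := by
    funext x
    rw [gaussianPDFReal_zero_one]
    by_cases hx : t < x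
    · simp only [Set.indicator_of_mem (mem_Ioi.mpr hx), if_pos hx]
      ring
    · simp [Set.indicator_of_notMem, hx, mem_Ioi]
  rw [h, integral_indicator measurableSet_Ioi, integral_const_mul, integral_Ioi_mul_exp,
    sqrt_two_pi_inv]

lemma integral_exp_neg_mul_sq_gaussianReal {b : ℝ} (hb : 0 ≤ b) :
    ∫ x, Real.exp (-b * x ^ 2) ∂(gaussianReal 0 1) = (1 + 2 * b) ^ (-(1:ℝ)/2) := by
  rw [integral_gaussianReal_eq]
  have h : (fun x => gaussianPDFReal 0 1 x * Real.exp (-b * x ^ 2))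
      = fun x => (Real.sqrt (2 * π))⁻¹ * Real.exp (-(b + 1/2) * x ^ 2) := by
    funext x
    rw [gaussianPDFReal_zero_one, mul_assoc, ← Real.exp_add]
    congr 2
    ring
  rw [h, integral_const_mul, integral_gaussian]
  have h2 : Real.sqrt (π / (b + 1/2)) = Real.sqrt (2 * π) * Real.sqrt ((1 + 2*b)⁻¹) := by
    rw [← Real.sqrt_mul (by positivity)]
    congr 1
    field_simp
    ring
  rw [h2, ← mul_assoc, inv_mul_cancel₀ (Real.sqrt_ne_zero'.mpr (by positivity)), one_mul,
    Real.sqrt_inv, Real.sqrt_eq_rpow, show (-(1:ℝ)/2) = -(1/2 : ℝ) by norm_num,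
    Real.rpow_neg (by positivity)]

lemma integral_pi_pow (n : ℕ) (μ : Measure ℝ) [IsProbabilityMeasure μ] (f : ℝ → ℝ) :
    ∫ x : Fin n → ℝ, ∏ i, f (x i) ∂(Measure.pi fun _ => μ) = (∫ x, f x ∂μ) ^ n := by
  induction n with
  | zero => simp
  | succ m ih =>
    have h := (measurePreserving_piFinSuccAbove (fun _ : Fin (m+1) => μ) 0).symm
    rw [← h.integral_comp']
    simp only [MeasurableEquiv.piFinSuccAbove_symm_apply, Fin.insertNthEquiv,
      Fin.prod_univ_succ, Fin.insertNth_zero, Equiv.coe_fn_mk, Fin.cons_succ,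
      Fin.zero_succAbove, cast_eq, Fin.cons_zero]
    rw [integral_prod_mul f (fun y : Fin m → ℝ => ∏ i, f (y i)), ih, pow_succ]
    ring

lemma map_tuple_eq_pi {Ω : Type*} [MeasureSpace Ω] [IsProbabilityMeasure (ℙ : Measure Ω)]
    {ι : Type*} [Fintype ι] (X : ι → Ω → ℝ)
    (hindep : iIndepFun X ℙ)
    (hlaw : ∀ i, Measure.map (X i) ℙ = gaussianReal 0 1) :
    Measure.map (fun ω i => X i ω) ℙ = Measure.pi (fun _ => gaussianReal 0 1) := by
  have hAEi : ∀ i, AEMeasurable (X i) ℙ := by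
    intro i
    by_contra h
    have h0 := Measure.map_of_not_aemeasurable h
    rw [hlaw i] at h0
    exact (IsProbabilityMeasure.ne_zero (gaussianReal 0 1)) h0
  obtain ⟨g, hg, hge⟩ : ∃ g : ι → Ω → ℝ, (∀ i, Measurable (g i)) ∧ ∀ i, X i =ᵐ[ℙ] g i := by
    choose g hg hge using hAEi
    exact ⟨g, hg, hge⟩
  have hAE : AEMeasurable (fun ω i => X i ω) ℙ := by
    refine ⟨fun ω i => g i ω, measurable_pi_lambda _ hg, ?_⟩
    filter_upwards [ae_all_iff.2 hge] with ω h
    funext i; exact h i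
  refine (Measure.pi_eq fun s hs => ?_).symm
  rw [Measure.map_apply_of_aemeasurable hAE (MeasurableSet.univ_pi hs)]
  have hset : (fun ω i => X i ω) ⁻¹' (Set.pi Set.univ s)
      = ⋂ i ∈ (Finset.univ : Finset ι), X i ⁻¹' s i := by
    ext ω
    simp [Set.mem_pi]
  rw [hset, hindep.measure_inter_preimage_eq_mul Finset.univ (fun i _ => hs i)]
  exact Finset.prod_congr rfl fun i _ => by
    rw [← Measure.map_apply_of_aemeasurable (hAEi i) (hs i), hlaw i]

lemma ae_sum_sq_pos {n : ℕ} (hn : 0 < n) :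
    ∀ᵐ w : Fin n → ℝ ∂(Measure.pi fun _ => gaussianReal 0 1), 0 < ∑ i, (w i) ^ 2 := by
  have h0 : (gaussianReal 0 1 : Measure ℝ) {0} = 0 := by
    rw [gaussianReal_of_var_ne_zero 0 one_ne_zero]
    exact withDensity_absolutelyContinuous _ _ (measure_singleton 0)
  have hnull : (Measure.pi fun _ : Fin n => gaussianReal 0 1)
      (Function.eval (⟨0, hn⟩ : Fin n) ⁻¹' {0}) = 0 :=
    Measure.pi_eval_preimage_null _ h0
  rw [ae_iff]
  refine measure_mono_null (fun w hw => ?_) hnull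
  simp only [not_lt, mem_setOf_eq] at hw
  have hsum : ∑ i, (w i) ^ 2 = 0 :=
    le_antisymm hw (Finset.sum_nonneg fun j _ => sq_nonneg (w j))
  have hz := (Finset.sum_eq_zero_iff_of_nonneg fun j (_ : j ∈ Finset.univ) => sq_nonneg (w j)).1
    hsum ⟨0, hn⟩ (Finset.mem_univ _)
  have : w ⟨0, hn⟩ = 0 := by
    exact pow_eq_zero_iff (two_ne_zero) |>.1 hz
  simpa [Function.eval] using this

/-- If `Z, W₁, …, Wₙ` are i.i.d. standard normal and `a ∈ ℝ`, then
`E[Z · 1{Z / √((1/n)(W₁²+⋯+Wₙ²)) > a}] = (2π)^{-1/2} (1 + a²/n)^{-n/2}`. -/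
theorem student_hermite_coeff
    {Ω : Type*} [MeasureSpace Ω] [IsProbabilityMeasure (ℙ : Measure Ω)]
    (n : ℕ) (hn : 0 < n) (Z : Ω → ℝ) (W : Fin n → Ω → ℝ) (a : ℝ)
    (hindep : iIndepFun
      (Fin.cases Z W : Fin (n + 1) → Ω → ℝ) ℙ)
    (hlaw : ∀ i : Fin (n + 1),
      Measure.map (Fin.cases Z W i : Ω → ℝ) ℙ = gaussianReal 0 1) :
    ∫ ω, Z ω *
        (if a < Z ω / Real.sqrt ((1 / n) * ∑ i, (W i ω) ^ 2) then (1 : ℝ) else 0)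
        ∂(ℙ : Measure Ω)
      = (2 * Real.pi) ^ (-(1 : ℝ) / 2) * (1 + a ^ 2 / n) ^ (-(n : ℝ) / 2) := by
  have hn' : (0:ℝ) < n := Nat.cast_pos.mpr hn
  set F : (Fin (n+1) → ℝ) → ℝ := fun x =>
    x 0 * (if a < x 0 / Real.sqrt ((1/n) * ∑ j : Fin n, (x j.succ)^2) then (1:ℝ) else 0)
    with hF
  have hFmeas : Measurable F := by
    have h1 : Measurable fun x : Fin (n+1) → ℝ => x 0 := measurable_pi_apply 0
    have h2 : Measurable fun x : Fin (n+1) → ℝ =>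
        x 0 / Real.sqrt ((1/n) * ∑ j : Fin n, (x j.succ)^2) := by
      refine h1.div ?_
      refine Measurable.sqrt ?_
      refine Measurable.const_mul ?_ _
      exact Finset.measurable_sum _ fun j _ => (measurable_pi_apply j.succ).pow_const 2
    exact h1.mul (Measurable.ite (measurableSet_lt measurable_const h2)
      measurable_const measurable_const)
  have hmap := map_tuple_eq_pi (Fin.cases Z W) hindep hlaw
  have hAE : AEMeasurable (fun ω i => Fin.cases Z W i ω : Ω → Fin (n+1) → ℝ) ℙ := by
    by_contra h
    have h0 := Measure.map_of_not_aemeasurable h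
    rw [hmap] at h0
    exact (IsProbabilityMeasure.ne_zero _) h0
  have step1 : ∫ ω, Z ω *
        (if a < Z ω / Real.sqrt ((1 / n) * ∑ i, (W i ω) ^ 2) then (1 : ℝ) else 0)
        ∂(ℙ : Measure Ω)
      = ∫ x, F x ∂(Measure.map (fun ω i => Fin.cases Z W i ω) ℙ) := by
    rw [integral_map hAE hFmeas.aestronglyMeasurable]
    refine integral_congr_ae (ae_of_all _ fun ω => ?_)
    simp only [hF, Fin.cases_zero, Fin.cases_succ]
    rfl
  rw [step1, hmap]
  -- split off coordinate 0
  have hsplit := measurePreserving_piFinSuccAbove (fun _ : Fin (n+1) => gaussianReal 0 1) 0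
  set G : ℝ × (Fin n → ℝ) → ℝ := fun p =>
    p.1 * (if a < p.1 / Real.sqrt ((1/n) * ∑ j, (p.2 j)^2) then (1:ℝ) else 0) with hG
  have hGmeas : Measurable G := by
    have h1 : Measurable fun p : ℝ × (Fin n → ℝ) => p.1 := measurable_fst
    have h2 : Measurable fun p : ℝ × (Fin n → ℝ) =>
        p.1 / Real.sqrt ((1/n) * ∑ j, (p.2 j)^2) := by
      refine h1.div (Measurable.sqrt (Measurable.const_mul ?_ _))
      exact Finset.measurable_sum _ fun j _ => ((measurable_pi_apply j).comp measurable_snd).pow_const 2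
    exact h1.mul (Measurable.ite (measurableSet_lt measurable_const h2)
      measurable_const measurable_const)
  have step2 : ∫ x, F x ∂(Measure.pi fun _ : Fin (n+1) => gaussianReal 0 1)
      = ∫ p, G p ∂((gaussianReal 0 1).prod (Measure.pi fun _ : Fin n => gaussianReal 0 1)) := by
    rw [← hsplit.integral_comp']
    refine integral_congr_ae (ae_of_all _ fun x => ?_)
    simp only [hF, hG, MeasurableEquiv.piFinSuccAbove_apply, Fin.insertNthEquiv,
      Equiv.coe_fn_symm_mk, Fin.removeNth, Fin.zero_succAbove]
    rfl
  rw [step2]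
  -- integrability on the product
  have habs1 : Integrable (fun x : ℝ => |x|) (gaussianReal 0 1) := by
    rw [gaussianReal_of_var_ne_zero 0 one_ne_zero,
      integrable_withDensity_iff (measurable_gaussianPDF 0 1)
        (ae_of_all _ fun x => ENNReal.ofReal_lt_top)]
    have hf : (fun x : ℝ => |x| * (gaussianPDF 0 1 x).toReal)
        = fun x => (Real.sqrt (2 * π))⁻¹ * |x * Real.exp (-(1/2) * x ^ 2)| := by
      funext x
      rw [gaussianPDF_def, ENNReal.toReal_ofReal (gaussianPDFReal_nonneg 0 1 x)]
      have hpdf : gaussianPDFReal 0 1 x = (Real.sqrt (2 * π))⁻¹ * Real.exp (-(1/2) * x ^ 2) := by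
        simp only [gaussianPDFReal, NNReal.coe_one, mul_one, sub_zero]
        congr 2
        ring
      rw [hpdf, abs_mul, abs_of_nonneg (Real.exp_pos _).le]
      ring
    rw [hf]
    exact ((integrable_mul_exp_neg_mul_sq (by norm_num : (0:ℝ) < 1/2)).abs.const_mul _)
  have hfst : MeasurePreserving (Prod.fst : ℝ × (Fin n → ℝ) → ℝ)
      ((gaussianReal 0 1).prod (Measure.pi fun _ : Fin n => gaussianReal 0 1))
      (gaussianReal 0 1) := by
    refine ⟨measurable_fst, ?_⟩
    simp [Measure.map_fst_prod]
  have habs : Integrable (fun p : ℝ × (Fin n → ℝ) => |p.1|)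
      ((gaussianReal 0 1).prod (Measure.pi fun _ : Fin n => gaussianReal 0 1)) :=
    (hfst.integrable_comp habs1.aestronglyMeasurable).mpr habs1
  have hGint : Integrable G
      ((gaussianReal 0 1).prod (Measure.pi fun _ : Fin n => gaussianReal 0 1)) := by
    refine habs.mono' hGmeas.aestronglyMeasurable (ae_of_all _ fun p => ?_)
    simp only [hG, Real.norm_eq_abs, abs_mul]
    have : |if a < p.1 / Real.sqrt ((1/n) * ∑ j, (p.2 j)^2) then (1:ℝ) else 0| ≤ 1 := by
      split <;> simp
    calc |p.1| * _ ≤ |p.1| * 1 := by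
          exact mul_le_mul_of_nonneg_left this (abs_nonneg _)
      _ = |p.1| := mul_one _
  rw [integral_prod_symm _ hGint]
  -- inner integral
  have hinner : ∀ᵐ w : Fin n → ℝ ∂(Measure.pi fun _ : Fin n => gaussianReal 0 1),
      (∫ z, G (z, w) ∂(gaussianReal 0 1))
        = (2 * π) ^ (-(1:ℝ)/2) * Real.exp (-(a^2 * ((1/n) * ∑ j, (w j)^2)) / 2) := by
    filter_upwards [ae_sum_sq_pos hn] with w hw
    have hs : (0:ℝ) < (1/n) * ∑ j, (w j)^2 := by positivity
    have hc : (0:ℝ) < Real.sqrt ((1/n) * ∑ j, (w j)^2) := Real.sqrt_pos.mpr hs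
    have hiff : ∀ z : ℝ, (a < z / Real.sqrt ((1/n) * ∑ j, (w j)^2))
        ↔ a * Real.sqrt ((1/n) * ∑ j, (w j)^2) < z := fun z => lt_div_iff₀ hc
    have : (fun z : ℝ => G (z, w))
        = fun z => z * (if a * Real.sqrt ((1/n) * ∑ j, (w j)^2) < z then (1:ℝ) else 0) := by
      funext z
      simp only [hG]
      congr 1
      exact if_congr (hiff z) rfl rfl
    rw [this, integral_mul_ite_gaussianReal]
    congr 2
    rw [mul_pow, Real.sq_sqrt hs.le]
  rw [integral_congr_ae hinner, integral_const_mul]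
  -- product structure
  have hprod : ∀ w : Fin n → ℝ,
      Real.exp (-(a^2 * ((1/n) * ∑ j, (w j)^2)) / 2)
        = ∏ j, Real.exp (-(a^2/(2*n)) * (w j)^2) := by
    intro w
    rw [← Real.exp_sum]
    congr 1
    rw [← Finset.mul_sum]
    have hne : (n:ℝ) ≠ 0 := hn'.ne'
    field_simp
  have hstep3 : ∫ w, Real.exp (-(a^2 * ((1/n) * ∑ j, (w j)^2)) / 2)
        ∂(Measure.pi fun _ : Fin n => gaussianReal 0 1)
      = ∫ w, ∏ j, Real.exp (-(a^2/(2*n)) * (w j)^2)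
        ∂(Measure.pi fun _ : Fin n => gaussianReal 0 1) :=
    integral_congr_ae (ae_of_all _ hprod)
  rw [hstep3, integral_pi_pow n _ (fun x => Real.exp (-(a^2/(2*(n:ℝ))) * x^2)),
    integral_exp_neg_mul_sq_gaussianReal (by positivity)]
  congr 1
  have h1 : 1 + 2*(a^2/(2*(n:ℝ))) = 1 + a^2/n := by
    field_simp
  rw [h1, ← Real.rpow_natCast ((1 + a^2/(n:ℝ)) ^ (-(1:ℝ)/2)) n,
    ← Real.rpow_mul (by positivity)]
  congr 1
  ring
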